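/- Let n ≥ 1 and 0 ≤ p ≤ q. Define γ_j = ((−1)^j/j!)·(q−p+1)!/((q−p+1+j)!) for 0 ≤ j ≤ p, and the operator Proj = ∑_{j=0}^{p} γ_j·(E)^j·(E†)^j on P_{p,q}. Then for every 0 ≤ ℓ ≤ p and every symplectic homogeneous polynomial R ∈ R_{p−ℓ,q+ℓ}, one has Proj((E)^ℓ R) = δ_{ℓ0}·(E)^ℓ R; i.e., Proj projects P_{p,q} onto its symplectic component R_{p,q} in the Fischer decomposition P_{p,q} = ⊕_{ℓ=0}^{p} (E)^ℓ R_{p−ℓ,q+ℓ}. -/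

import Mathlib

open MvPolynomial
open scoped fwdDiff

noncomputable section

/-- The inclusion `Fin n → Fin (2n)`, `j ↦ j`. -/
def il (n : ℕ) (j : Fin n) : Fin (2 * n) := ⟨j.1, by have := j.2; omega⟩

/-- The inclusion `Fin n → Fin (2n)`, `j ↦ n + j`. -/
def ir (n : ℕ) (j : Fin n) : Fin (2 * n) := ⟨n + j.1, by have := j.2; omega⟩

/-- Bihomogeneous of bidegree `(p,q)` on `ℂ^{2n}`
(variables `Sum.inl j = z_j`, `Sum.inr j = z̄_j`, `j : Fin 2n`). -/
def BiHom (n : ℕ) (P : MvPolynomial (Fin (2 * n) ⊕ Fin (2 * n)) ℂ) (p q : ℕ) : Prop :=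
  ∀ α ∈ P.support,
    (∑ j : Fin (2 * n), α (Sum.inl j)) = p ∧ (∑ j : Fin (2 * n), α (Sum.inr j)) = q

/-- The twisted Euler operator `E = ∑_{j=1}^n (z_j ∂_{z̄_{n+j}} − z_{n+j} ∂_{z̄_j})`. -/
def Eop (n : ℕ) (P : MvPolynomial (Fin (2 * n) ⊕ Fin (2 * n)) ℂ) :
    MvPolynomial (Fin (2 * n) ⊕ Fin (2 * n)) ℂ :=
  ∑ j : Fin n,
    (X (Sum.inl (il n j)) * pderiv (Sum.inr (ir n j)) P
      - X (Sum.inl (ir n j)) * pderiv (Sum.inr (il n j)) P)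

/-- The twisted Euler operator `E† = −∑_{j=1}^n (z̄_j ∂_{z_{n+j}} − z̄_{n+j} ∂_{z_j})`. -/
def Edag (n : ℕ) (P : MvPolynomial (Fin (2 * n) ⊕ Fin (2 * n)) ℂ) :
    MvPolynomial (Fin (2 * n) ⊕ Fin (2 * n)) ℂ :=
  -∑ j : Fin n,
    (X (Sum.inr (il n j)) * pderiv (Sum.inl (ir n j)) P
      - X (Sum.inr (ir n j)) * pderiv (Sum.inl (il n j)) P)

/-- The coefficients `γ_j = ((−1)^j/j!)·(q−p+1)!/((q−p+1+j)!)`. -/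
def gammaCoeff (p q j : ℕ) : ℂ :=
  ((-1 : ℂ) ^ j / (j.factorial : ℂ)) *
    (((q - p + 1).factorial : ℂ) / (((q - p + 1 + j).factorial : ℂ)))





variable {n : ℕ}

@[simp] lemma il_eq_ir_iff (j k : Fin n) : il n j = ir n k ↔ False := by
  have := j.2; have := k.2
  simp only [il, ir, Fin.ext_iff, iff_false]; omega
@[simp] lemma ir_eq_il_iff (j k : Fin n) : ir n j = il n k ↔ False := by
  have := j.2; have := k.2
  simp only [il, ir, Fin.ext_iff, iff_false]; omega
@[simp] lemma il_eq_il_iff {j k : Fin n} : il n j = il n k ↔ j = k := by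
  simp only [il, Fin.ext_iff]
@[simp] lemma ir_eq_ir_iff {j k : Fin n} : ir n j = ir n k ↔ j = k := by
  simp only [ir, Fin.ext_iff]; omega

abbrev Vars (n : ℕ) := (Fin (2 * n) ⊕ Fin (2 * n))
abbrev Pol (n : ℕ) := MvPolynomial (Vars n) ℂ

def zl (j : Fin n) : Vars n := Sum.inl (il n j)
def zr (j : Fin n) : Vars n := Sum.inl (ir n j)
def wl (j : Fin n) : Vars n := Sum.inr (il n j)
def wr (j : Fin n) : Vars n := Sum.inr (ir n j)

def Tt (j : Fin n) (Q : Pol n) : Pol n := X (zl j) * pderiv (wr j) Q - X (zr j) * pderiv (wl j) Q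
def Ss (k : Fin n) (Q : Pol n) : Pol n := X (wl k) * pderiv (zr k) Q - X (wr k) * pderiv (zl k) Q

lemma pdX (u v : Vars n) : pderiv u (X v : Pol n) = if v = u then 1 else 0 := by
  split <;> simp_all

lemma pd_swap (a b : Fin (2*n)) (P : Pol n) :
    pderiv (Sum.inl a) (pderiv (Sum.inr b) P) = pderiv (Sum.inr b) (pderiv (Sum.inl a) P) := by
  induction P using MvPolynomial.induction_on' with
  | add p q hp hq => simp [hp, hq]
  | monomial s c =>
    simp only [pderiv_monomial]
    rw [tsub_right_comm]
    congr 1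
    rw [Finsupp.tsub_apply, Finsupp.tsub_apply, Finsupp.single_apply, Finsupp.single_apply,
      if_neg (by simp), if_neg (by simp)]
    push_cast [Nat.sub_zero]
    ring

lemma pair (k j : Fin n) (P : Pol n) :
    Ss k (Tt j P) - Tt j (Ss k P) =
      if k = j then (X (zl j) * pderiv (zl j) P + X (zr j) * pderiv (zr j) P
        - X (wl j) * pderiv (wl j) P - X (wr j) * pderiv (wr j) P) else 0 := by
  rcases eq_or_ne k j with rfl | hkj
  · simp only [if_pos rfl, Tt, Ss, map_sub, pderiv_mul, pdX, zl, zr, wl, wr]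
    simp only [Sum.inl.injEq, Sum.inr.injEq, il_eq_ir_iff, ir_eq_il_iff, il_eq_il_iff,
      ir_eq_ir_iff, reduceIte, if_true, if_false, Sum.inr.injEq, reduceCtorEq,
      Sum.inl_ne_inr, Sum.inr_ne_inl, if_neg (Sum.inl_ne_inr), if_neg (Sum.inr_ne_inl)]
    simp only [pd_swap]
    ring
  · simp only [if_neg hkj, Tt, Ss, map_sub, pderiv_mul, pdX, zl, zr, wl, wr]
    simp only [Sum.inl.injEq, Sum.inr.injEq, il_eq_ir_iff, ir_eq_il_iff, il_eq_il_iff,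
      ir_eq_ir_iff, if_false, if_neg (Ne.symm hkj), if_neg hkj, reduceCtorEq,
      if_neg (Sum.inl_ne_inr), if_neg (Sum.inr_ne_inl)]
    simp only [pd_swap]
    ring
lemma Ss_sum {ι : Type*} (k : Fin n) (s : Finset ι) (f : ι → Pol n) :
    Ss k (∑ i ∈ s, f i) = ∑ i ∈ s, Ss k (f i) := by
  simp [Ss, Finset.mul_sum, Finset.sum_sub_distrib]

lemma Tt_sum {ι : Type*} (j : Fin n) (s : Finset ι) (f : ι → Pol n) :
    Tt j (∑ i ∈ s, f i) = ∑ i ∈ s, Tt j (f i) := by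
  simp [Tt, Finset.mul_sum, Finset.sum_sub_distrib]

lemma Tt_neg (j : Fin n) (f : Pol n) : Tt j (-f) = -Tt j f := by
  simp [Tt]; ring

lemma sum_split (g : Fin (2 * n) → Pol n) :
    ∑ c : Fin (2 * n), g c = ∑ j : Fin n, g (il n j) + ∑ j : Fin n, g (ir n j) := by
  have hb : Function.Bijective (Sum.elim (il n) (ir n) : Fin n ⊕ Fin n → Fin (2 * n)) := by
    rw [Fintype.bijective_iff_injective_and_card]
    constructor
    · rintro (a | a) (b | b) h <;>
        simp only [Sum.elim_inl, Sum.elim_inr, il_eq_il_iff, ir_eq_ir_iff, il_eq_ir_iff,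
          ir_eq_il_iff] at h <;> simp [h]
    · simp [Fintype.card_sum]; omega
  rw [← Fintype.sum_bijective _ hb (fun x => g (Sum.elim (il n) (ir n) x)) g (fun _ => rfl)]
  rw [Fintype.sum_sum_type]
  rfl

lemma comm_euler (P : Pol n) :
    Edag n (Eop n P) - Eop n (Edag n P)
      = (∑ c : Fin (2 * n), X (Sum.inr c) * pderiv (Sum.inr c) P)
        - ∑ c : Fin (2 * n), X (Sum.inl c) * pderiv (Sum.inl c) P := by
  have hE : ∀ Q : Pol n, Eop n Q = ∑ j, Tt j Q := fun _ => rfl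
  have hD : ∀ Q : Pol n, Edag n Q = -∑ k, Ss k Q := fun _ => rfl
  calc Edag n (Eop n P) - Eop n (Edag n P)
      = -∑ k, ∑ j, (Ss k (Tt j P) - Tt j (Ss k P)) := by
        rw [hD, hE, hE, hD]
        simp only [Tt_neg, Ss_sum, Tt_sum, Finset.sum_neg_distrib, Finset.sum_sub_distrib,
          neg_sub, neg_neg]
        rw [Finset.sum_comm (γ := Fin n) (s := Finset.univ) (t := Finset.univ)
          (f := fun x y => Tt x (Ss y P))]
        ring
    _ = -∑ j : Fin n, (X (zl j) * pderiv (zl j) P + X (zr j) * pderiv (zr j) P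
          - X (wl j) * pderiv (wl j) P - X (wr j) * pderiv (wr j) P) := by
        simp only [pair]
        rw [Finset.sum_comm]
        congr 1
        refine Finset.sum_congr rfl fun j _ => ?_
        simp
    _ = (∑ c : Fin (2 * n), X (Sum.inr c) * pderiv (Sum.inr c) P)
        - ∑ c : Fin (2 * n), X (Sum.inl c) * pderiv (Sum.inl c) P := by
        rw [sum_split (fun c => X (Sum.inr c) * pderiv (Sum.inr c) P),
          sum_split (fun c => X (Sum.inl c) * pderiv (Sum.inl c) P)]
        simp only [zl, zr, wl, wr, Finset.sum_add_distrib, Finset.sum_sub_distrib]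
        ring
lemma X_mul_pderiv_monomial' {σ : Type*} [DecidableEq σ] (i : σ) (s : σ →₀ ℕ) (a : ℂ) :
    X i * pderiv i (monomial s a) = (s i) • monomial s a := by
  rcases Nat.eq_zero_or_pos (s i) with h | h
  · simp [pderiv_monomial, h]
  · rw [pderiv_monomial, X, monomial_mul, one_mul,
      add_comm, tsub_add_cancel_of_le (by simpa using Finsupp.single_le_iff.2 (show 1 ≤ s i from h)),
      smul_monomial]
    congr 1
    push_cast
    ring

lemma euler_general {σ τ : Type*} [DecidableEq σ] [Fintype τ] (f : τ → σ)
    (P : MvPolynomial σ ℂ) (b : ℕ)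
    (h : ∀ α ∈ P.support, ∑ c : τ, α (f c) = b) :
    ∑ c : τ, X (f c) * pderiv (f c) P = b • P := by
  calc ∑ c : τ, X (f c) * pderiv (f c) P
      = ∑ c : τ, ∑ α ∈ P.support, X (f c) * pderiv (f c) (monomial α (coeff α P)) := by
        refine Finset.sum_congr rfl fun c _ => ?_
        conv_lhs => rw [P.as_sum]
        rw [map_sum, Finset.mul_sum]
    _ = ∑ α ∈ P.support, ∑ c : τ, (α (f c)) • monomial α (coeff α P) := by
        rw [Finset.sum_comm]
        exact Finset.sum_congr rfl fun α _ => Finset.sum_congr rfl fun c _ =>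
          X_mul_pderiv_monomial' _ _ _
    _ = ∑ α ∈ P.support, b • monomial α (coeff α P) := by
        refine Finset.sum_congr rfl fun α hα => ?_
        rw [← Finset.sum_smul, h α hα]
    _ = b • P := by rw [← Finset.smul_sum, ← P.as_sum]

lemma commA (P : Pol n) (a b : ℕ) (h : BiHom n P a b) :
    Edag n (Eop n P) = Eop n (Edag n P) + ((b : ℂ) - (a : ℂ)) • P := by
  have h1 := comm_euler P
  rw [euler_general Sum.inr P b (fun α hα => (h α hα).2),
      euler_general Sum.inl P a (fun α hα => (h α hα).1)] at h1
  have h2 : (b • P : Pol n) - a • P = ((b : ℂ) - (a : ℂ)) • P := by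
    rw [sub_smul, Nat.cast_smul_eq_nsmul, Nat.cast_smul_eq_nsmul]
  rw [h2] at h1
  linear_combination h1

lemma Eop_smul (c : ℂ) (P : Pol n) : Eop n (c • P) = c • Eop n P := by
  simp [Eop, Finset.smul_sum, smul_sub, mul_smul_comm]

lemma Edag_smul (c : ℂ) (P : Pol n) : Edag n (c • P) = c • Edag n P := by
  simp [Edag, Finset.smul_sum, smul_sub, mul_smul_comm]

@[simp] lemma Eop_zero : Eop n 0 = 0 := by simp [Eop]
@[simp] lemma Edag_zero : Edag n 0 = 0 := by simp [Edag]

lemma BiHom_zero (p q : ℕ) : BiHom n 0 p q := by intro α hα; simp at hα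

lemma BiHom_sum {ι : Type*} (s : Finset ι) (f : ι → Pol n) (p q : ℕ)
    (h : ∀ i ∈ s, BiHom n (f i) p q) : BiHom n (∑ i ∈ s, f i) p q := by
  intro α hα
  classical
  obtain ⟨i, hi, hαi⟩ := Finset.mem_biUnion.1 (MvPolynomial.support_sum hα)
  exact h i hi α hαi

lemma BiHom_sub (f g : Pol n) (p q : ℕ) (hf : BiHom n f p q) (hg : BiHom n g p q) :
    BiHom n (f - g) p q := by
  intro α hα
  classical
  have : α ∈ f.support ∪ g.support := by
    by_contra hc
    simp only [Finset.mem_union, not_or, MvPolynomial.notMem_support_iff] at hc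
    simp [MvPolynomial.mem_support_iff, coeff_sub, hc.1, hc.2] at hα
  rcases Finset.mem_union.1 this with h | h
  · exact hf α h
  · exact hg α h

lemma BiHom_monomial_term (v u : Fin (2 * n)) (α : Vars n →₀ ℕ) (c : ℂ) (a b : ℕ)
    (hL : ∑ j : Fin (2 * n), α (Sum.inl j) = a)
    (hR : ∑ j : Fin (2 * n), α (Sum.inr j) = b + 1) :
    BiHom n (X (Sum.inl v) * pderiv (Sum.inr u) (monomial α c)) (a + 1) b := by
  classical
  rcases Nat.eq_zero_or_pos (α (Sum.inr u)) with h0 | hpos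
  · rw [pderiv_monomial, h0]
    simpa using BiHom_zero (n := n) (a+1) b
  · rw [pderiv_monomial, X, monomial_mul, one_mul]
    intro β hβ
    have hβ' : β = Finsupp.single (Sum.inl v) 1 + (α - Finsupp.single (Sum.inr u) 1) :=
      Finset.mem_singleton.1 (support_monomial_subset hβ)
    subst hβ'
    have keyL : ∀ j : Fin (2 * n),
        ((Finsupp.single (Sum.inl v) 1 + (α - Finsupp.single (Sum.inr u) 1) : Vars n →₀ ℕ))
          (Sum.inl j) = (if v = j then 1 else 0) + α (Sum.inl j) := by
      intro j
      simp [Finsupp.add_apply, Finsupp.tsub_apply, Finsupp.single_apply]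
    have keyR : ∀ j : Fin (2 * n),
        ((Finsupp.single (Sum.inl v) 1 + (α - Finsupp.single (Sum.inr u) 1) : Vars n →₀ ℕ))
          (Sum.inr j) = α (Sum.inr j) - (if u = j then 1 else 0) := by
      intro j
      simp [Finsupp.add_apply, Finsupp.tsub_apply, Finsupp.single_apply]
    constructor
    · rw [Finset.sum_congr rfl fun j _ => keyL j, Finset.sum_add_distrib,
        Finset.sum_ite_eq, hL, if_pos (Finset.mem_univ v)]
      omega
    · rw [Finset.sum_congr rfl fun j _ => keyR j]
      rw [← Finset.sum_erase_add _ _ (Finset.mem_univ u), if_pos rfl]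
      rw [Finset.sum_congr rfl (fun j hj =>
        by rw [if_neg (Ne.symm (Finset.ne_of_mem_erase hj)), Nat.sub_zero])]
      rw [← Finset.sum_erase_add _ _ (Finset.mem_univ u)] at hR
      omega

lemma bihom_Eop (P : Pol n) (a b : ℕ) (h : BiHom n P a (b + 1)) :
    BiHom n (Eop n P) (a + 1) b := by
  classical
  have hE : Eop n P = ∑ j : Fin n, ∑ α ∈ P.support,
      (X (Sum.inl (il n j)) * pderiv (Sum.inr (ir n j)) (monomial α (coeff α P))
        - X (Sum.inl (ir n j)) * pderiv (Sum.inr (il n j)) (monomial α (coeff α P))) := by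
    rw [Eop]
    refine Finset.sum_congr rfl fun j _ => ?_
    conv_lhs => rw [P.as_sum]
    rw [map_sum, map_sum, Finset.mul_sum, Finset.mul_sum, Finset.sum_sub_distrib]
  rw [hE]
  refine BiHom_sum _ _ _ _ fun j _ => BiHom_sum _ _ _ _ fun α hα => ?_
  obtain ⟨hL, hR⟩ := h α hα
  exact BiHom_sub _ _ _ _
    (BiHom_monomial_term _ _ _ _ _ _ hL hR)
    (BiHom_monomial_term _ _ _ _ _ _ hL hR)

lemma bihom_Epow (R : Pol n) (a b : ℕ) (hR : BiHom n R a b) :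
    ∀ m, m ≤ b → BiHom n ((Eop n)^[m] R) (a + m) (b - m) := by
  intro m
  induction m with
  | zero => intro _; simpa using hR
  | succ m ih =>
    intro hm
    rw [Function.iterate_succ_apply']
    have h1 : BiHom n ((Eop n)^[m] R) (a + m) ((b - (m + 1)) + 1) := by
      have := ih (by omega)
      rwa [show b - m = (b - (m+1)) + 1 by omega] at this
    have := bihom_Eop _ _ _ h1
    rwa [show a + m + 1 = a + (m + 1) by omega] at this

lemma EdagEpow (R : Pol n) (a b : ℕ) (hR : BiHom n R a b) (h0 : Edag n R = 0) :
    ∀ m, m + 1 ≤ b → Edag n ((Eop n)^[m + 1] R)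
      = (((m : ℂ) + 1) * ((b : ℂ) - (a : ℂ) - (m : ℂ))) • (Eop n)^[m] R := by
  intro m
  induction m with
  | zero =>
    intro _
    rw [Function.iterate_one, commA R a b hR, h0, Eop_zero, zero_add,
      Function.iterate_zero, id]
    congr 1
    ring
  | succ m ih =>
    intro hm
    have hbi := bihom_Epow R a b hR (m + 1) (by omega)
    rw [Function.iterate_succ_apply' (Eop n) (m + 1) R, commA _ _ _ hbi,
      ih (by omega), Eop_smul,
      ← Function.iterate_succ_apply' (Eop n) m R, ← add_smul]
    congr 1
    rw [Nat.cast_sub (by omega : m + 1 ≤ b)]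
    push_cast
    ring

lemma EdagPowEpow (R : Pol n) (a b : ℕ) (hR : BiHom n R a b) (h0 : Edag n R = 0)
    (ℓ : ℕ) (hb : ℓ ≤ b) :
    ∀ j, j ≤ ℓ → (Edag n)^[j] ((Eop n)^[ℓ] R)
      = (∏ i ∈ Finset.range j, (((ℓ : ℂ) - i) * ((b : ℂ) - (a : ℂ) - ℓ + 1 + i)))
          • (Eop n)^[ℓ - j] R := by
  intro j
  induction j with
  | zero => intro _; simp
  | succ j ih =>
    intro hj
    rw [Function.iterate_succ_apply', ih (by omega)]
    have hsplit : ℓ - j = (ℓ - (j + 1)) + 1 := by omega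
    rw [hsplit, Edag_smul, EdagEpow R a b hR h0 (ℓ - (j+1)) (by omega),
      smul_smul, Finset.prod_range_succ]
    congr 1
    rw [Nat.cast_sub (by omega : j + 1 ≤ ℓ)]
    push_cast
    ring


lemma fwd_prod_zero : ∀ (d : ℕ) (c : ℂ),
    (fwdDiff (1:ℕ))^[d + 1] (fun x : ℕ => ∏ i ∈ Finset.range d, (c + x + i)) = 0 := by
  intro d
  induction d with
  | zero =>
    intro c
    funext x
    simp [fwdDiff]
  | succ d ih =>
    intro c
    have key : (fwdDiff (1:ℕ)) (fun x : ℕ => ∏ i ∈ Finset.range (d + 1), (c + x + i))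
        = ((d : ℂ) + 1) • (fun x : ℕ => ∏ i ∈ Finset.range d, ((c + 1) + x + i)) := by
      funext x
      simp only [fwdDiff, Pi.smul_apply, smul_eq_mul]
      rw [Finset.prod_range_succ, Finset.prod_range_succ']
      have e1 : (∏ y ∈ Finset.range d, (c + ((x + 1 : ℕ) : ℂ) + (y : ℂ)))
          = ∏ y ∈ Finset.range d, (c + 1 + (x : ℂ) + (y : ℂ)) :=
        Finset.prod_congr rfl fun y _ => by push_cast; ring
      have e2 : (∏ y ∈ Finset.range d, (c + (x : ℂ) + ((y + 1 : ℕ) : ℂ)))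
          = ∏ y ∈ Finset.range d, (c + 1 + (x : ℂ) + (y : ℂ)) :=
        Finset.prod_congr rfl fun y _ => by push_cast; ring
      rw [e1, e2]
      push_cast
      ring
    rw [Function.iterate_succ_apply, key, fwdDiff_iter_const_smul, ih (c + 1), smul_zero]

lemma alt_sum_prod (ℓ : ℕ) (hl : 1 ≤ ℓ) (c : ℂ) :
    ∑ j ∈ Finset.range (ℓ + 1),
      (-1 : ℂ) ^ j * (ℓ.choose j) * (∏ i ∈ Finset.range (ℓ - 1), (c + j + i)) = 0 := by
  have h0 : (fwdDiff (1:ℕ))^[ℓ] (fun x : ℕ => ∏ i ∈ Finset.range (ℓ - 1), (c + x + i)) = 0 := by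
    have := fwd_prod_zero (ℓ - 1) c
    rwa [show ℓ - 1 + 1 = ℓ by omega] at this
  have h1 := fwdDiff_iter_eq_sum_shift (1 : ℕ)
    (fun x : ℕ => ∏ i ∈ Finset.range (ℓ - 1), (c + x + i)) ℓ 0
  rw [h0] at h1
  simp only [Pi.zero_apply, smul_eq_mul, zero_add, mul_one] at h1
  -- h1 : 0 = ∑ k in range (ℓ+1), ((-1)^(ℓ-k) * choose ℓ k : ℤ) • f (k • 1)
  have h2 : ∑ j ∈ Finset.range (ℓ + 1),
      (-1 : ℂ) ^ j * (ℓ.choose j) * (∏ i ∈ Finset.range (ℓ - 1), (c + j + i))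
      = (-1 : ℂ) ^ ℓ * ∑ k ∈ Finset.range (ℓ + 1),
        ((-1 : ℤ) ^ (ℓ - k) * (ℓ.choose k : ℤ)) •
          (∏ i ∈ Finset.range (ℓ - 1), (c + k + i)) := by
    rw [Finset.mul_sum]
    refine Finset.sum_congr rfl fun k hk => ?_
    have hk' : k ≤ ℓ := by simp at hk; omega
    have hsgn : (-1 : ℂ) ^ ℓ * (-1 : ℂ) ^ (ℓ - k) = (-1 : ℂ) ^ k := by
      rw [← pow_add, show ℓ + (ℓ - k) = k + 2 * (ℓ - k) by omega, pow_add, pow_mul,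
        neg_one_sq, one_pow, mul_one]
    rw [zsmul_eq_mul]
    push_cast
    rw [← hsgn]
    ring
  rw [h2, ← h1, mul_zero]
lemma fact_prod (t : ℕ) : ∀ j : ℕ, t.factorial * ∏ i ∈ Finset.range j, (t + 1 + i) = (t + j).factorial
  | 0 => by simp
  | (j+1) => by
    rw [Finset.prod_range_succ, ← mul_assoc, fact_prod t j,
      show t + (j+1) = (t + j) + 1 by omega, Nat.factorial_succ]
    ring

lemma term_eq (p q ℓ j : ℕ) (hl : 1 ≤ ℓ) (hj : j ≤ ℓ) :
    gammaCoeff p q j * ∏ i ∈ Finset.range j,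
        (((ℓ : ℂ) - i) * (((q - p : ℕ) : ℂ) + ℓ + 1 + i))
      = (((q - p + 1).factorial : ℂ) / (((q - p + ℓ).factorial : ℂ))) *
        ((-1 : ℂ) ^ j * (ℓ.choose j) *
          ∏ i ∈ Finset.range (ℓ - 1), (((q - p : ℕ) : ℂ) + 2 + j + i)) := by
  set m := q - p with hm
  have f0 : ∀ k : ℕ, ((k.factorial : ℂ)) ≠ 0 :=
    fun k => Nat.cast_ne_zero.mpr (Nat.factorial_ne_zero k)
  have hA : (∏ i ∈ Finset.range j, ((ℓ : ℂ) - i)) = (ℓ.descFactorial j : ℂ) := by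
    rw [Nat.descFactorial_eq_prod_range, Nat.cast_prod]
    refine Finset.prod_congr rfl fun i hi => ?_
    have hi' : i ≤ ℓ := by simp at hi; omega
    rw [Nat.cast_sub hi']
  have hD : (ℓ.descFactorial j : ℂ) = (ℓ.factorial : ℂ) / ((ℓ - j).factorial : ℂ) := by
    rw [eq_div_iff (f0 _), mul_comm]
    exact_mod_cast congrArg (Nat.cast : ℕ → ℂ) (Nat.factorial_mul_descFactorial hj)
  have hB : (∏ i ∈ Finset.range j, ((m : ℂ) + ℓ + 1 + i))
      = ((m + ℓ + j).factorial : ℂ) / ((m + ℓ).factorial : ℂ) := by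
    rw [eq_div_iff (f0 _), mul_comm]
    have := congrArg (Nat.cast : ℕ → ℂ) (fact_prod (m + ℓ) j)
    push_cast at this ⊢
    convert this using 2
  have hC : (∏ i ∈ Finset.range (ℓ - 1), ((m : ℂ) + 2 + j + i))
      = ((m + ℓ + j).factorial : ℂ) / ((m + j + 1).factorial : ℂ) := by
    rw [eq_div_iff (f0 _), mul_comm]
    have h1 := congrArg (Nat.cast : ℕ → ℂ) (fact_prod (m + j + 1) (ℓ - 1))
    rw [show m + j + 1 + (ℓ - 1) = m + ℓ + j by omega] at h1
    push_cast at h1 ⊢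
    convert h1 using 2
    refine Finset.prod_congr rfl fun i _ => by push_cast; ring
  have hch : ((ℓ.choose j : ℕ) : ℂ)
      = (ℓ.factorial : ℂ) / ((j.factorial : ℂ) * ((ℓ - j).factorial : ℂ)) :=
    Nat.cast_choose ℂ hj
  simp only [gammaCoeff, ← hm]
  rw [Finset.prod_mul_distrib, hA, hD, hB, hC, hch,
    show m + 1 + j = m + j + 1 by omega]
  field_simp

lemma scalar_sum (p q ℓ : ℕ) (hl : 1 ≤ ℓ) :
    ∑ j ∈ Finset.range (ℓ + 1), gammaCoeff p q j *
      ∏ i ∈ Finset.range j, (((ℓ : ℂ) - i) * (((q - p : ℕ) : ℂ) + ℓ + 1 + i)) = 0 := by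
  have e : ∑ j ∈ Finset.range (ℓ + 1), gammaCoeff p q j *
      ∏ i ∈ Finset.range j, (((ℓ : ℂ) - i) * (((q - p : ℕ) : ℂ) + ℓ + 1 + i))
      = (((q - p + 1).factorial : ℂ) / (((q - p + ℓ).factorial : ℂ))) *
        ∑ j ∈ Finset.range (ℓ + 1), (-1 : ℂ) ^ j * (ℓ.choose j) *
          ∏ i ∈ Finset.range (ℓ - 1), (((q - p : ℕ) : ℂ) + 2 + j + i) := by
    rw [Finset.mul_sum]
    exact Finset.sum_congr rfl fun j hj => term_eq p q ℓ j hl (by simp at hj; omega)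
  rw [e, alt_sum_prod ℓ hl (((q - p : ℕ) : ℂ) + 2), mul_zero]

lemma gamma_zero (p q : ℕ) : gammaCoeff p q 0 = 1 := by
  simp only [gammaCoeff, pow_zero, Nat.factorial_zero, Nat.cast_one, div_one, add_zero, one_mul]
  exact div_self (Nat.cast_ne_zero.mpr (Nat.factorial_ne_zero (q - p + 1)))

lemma Eop_pow_smul {n : ℕ} (j : ℕ) (c : ℂ) (Q : Pol n) :
    (Eop n)^[j] (c • Q) = c • (Eop n)^[j] Q := by
  induction j with
  | zero => simp
  | succ j ih => rw [Function.iterate_succ_apply', ih, Eop_smul,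
      ← Function.iterate_succ_apply' (Eop n) j Q]

theorem statement7 (n p q : ℕ) (hn : 1 ≤ n) (hpq : p ≤ q) (ℓ : ℕ) (hℓ : ℓ ≤ p)
    (R : MvPolynomial (Fin (2 * n) ⊕ Fin (2 * n)) ℂ)
    (hR : BiHom n R (p - ℓ) (q + ℓ)) (hRsymp : Edag n R = 0) :
    (∑ j ∈ Finset.range (p + 1),
        C (gammaCoeff p q j) * (Eop n)^[j] ((Edag n)^[j] ((Eop n)^[ℓ] R)))
      = if ℓ = 0 then (Eop n)^[ℓ] R else 0 := by
  have hb : ℓ ≤ q + ℓ := by omega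
  have hzero : ∀ j, ℓ < j → (Eop n)^[j] ((Edag n)^[j] ((Eop n)^[ℓ] R)) = 0 := by
    intro j hj
    have h1 : (Edag n)^[ℓ + 1] ((Eop n)^[ℓ] R) = 0 := by
      rw [Function.iterate_succ_apply' (Edag n) ℓ,
        EdagPowEpow R (p - ℓ) (q + ℓ) hR hRsymp ℓ hb ℓ le_rfl, Edag_smul,
        Nat.sub_self, Function.iterate_zero, id, hRsymp, smul_zero]
    have h2 : (Edag n)^[j] ((Eop n)^[ℓ] R) = 0 := by
      rw [show j = (j - (ℓ + 1)) + (ℓ + 1) by omega, Function.iterate_add_apply, h1,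
        Function.iterate_fixed Edag_zero]
    rw [h2, Function.iterate_fixed Eop_zero]
  rw [← Finset.sum_subset (Finset.range_subset_range.mpr (by omega : ℓ + 1 ≤ p + 1))
      (fun j hj hj' => by
        rw [hzero j (by simp only [Finset.mem_range] at hj hj' ⊢; omega), mul_zero])]
  have hterm : ∀ j, j ≤ ℓ → (Eop n)^[j] ((Edag n)^[j] ((Eop n)^[ℓ] R))
      = (∏ i ∈ Finset.range j, (((ℓ : ℂ) - i) *
          (((q + ℓ : ℕ) : ℂ) - ((p - ℓ : ℕ) : ℂ) - ℓ + 1 + i))) • (Eop n)^[ℓ] R := by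
    intro j hj
    rw [EdagPowEpow R (p - ℓ) (q + ℓ) hR hRsymp ℓ hb j hj, Eop_pow_smul,
      ← Function.iterate_add_apply, show j + (ℓ - j) = ℓ by omega]
  have hsum : (∑ j ∈ Finset.range (ℓ + 1),
        C (gammaCoeff p q j) * (Eop n)^[j] ((Edag n)^[j] ((Eop n)^[ℓ] R)))
      = (∑ j ∈ Finset.range (ℓ + 1), gammaCoeff p q j *
          ∏ i ∈ Finset.range j, (((ℓ : ℂ) - i) *
            (((q + ℓ : ℕ) : ℂ) - ((p - ℓ : ℕ) : ℂ) - ℓ + 1 + i))) • (Eop n)^[ℓ] R := by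
    rw [Finset.sum_smul]
    refine Finset.sum_congr rfl fun j hj => ?_
    rw [hterm j (by simp only [Finset.mem_range] at hj; omega), C_mul', smul_smul]
  rw [hsum]
  rcases Nat.eq_zero_or_pos ℓ with rfl | hl
  · rw [if_pos rfl, Finset.sum_range_one, Finset.range_zero, Finset.prod_empty,
      mul_one, gamma_zero, one_smul]
  · rw [if_neg (by omega)]
    have e : (∑ j ∈ Finset.range (ℓ + 1), gammaCoeff p q j *
          ∏ i ∈ Finset.range j, (((ℓ : ℂ) - i) *
            (((q + ℓ : ℕ) : ℂ) - ((p - ℓ : ℕ) : ℂ) - ℓ + 1 + i)))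
        = ∑ j ∈ Finset.range (ℓ + 1), gammaCoeff p q j *
          ∏ i ∈ Finset.range j, (((ℓ : ℂ) - i) * (((q - p : ℕ) : ℂ) + ℓ + 1 + i)) := by
      refine Finset.sum_congr rfl fun j _ => ?_
      congr 1
      refine Finset.prod_congr rfl fun i _ => ?_
      congr 1
      push_cast [Nat.cast_sub hℓ, Nat.cast_sub hpq, Nat.cast_sub (by omega : ℓ ≤ p)]
      ring
    rw [e, scalar_sum p q ℓ hl, zero_smul]

end
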